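/- Let q be a power of 2 and K = F_q, L = F_{q^6}. An element y ∈ L that does not generate L over K satisfies Tr_{L/K}(y) = Tr_{L/K}(y^3) = 0 if and only if y ∈ F_{q^3}. -/

import Mathlib

open Module IntermediateField Polynomial

private lemma aux13_trace_zero (K L : Type*) [Field K] [Field L] [Algebra K L]
    [CharP K 2] [FiniteDimensional K L] (h6 : Module.finrank K L = 6)
    (M : IntermediateField K L) (hM : Module.finrank K M = 3) {y : L} (hy : y ∈ M) :
    Algebra.trace K L y = 0 := by
  have hm : Module.finrank K M * Module.finrank M L = 6 := by
    rw [Module.finrank_mul_finrank]; exact h6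
  rw [hM] at hm
  have h2 : Module.finrank M L = 2 := by omega
  have hrepr : y = algebraMap M L ⟨y, hy⟩ := rfl
  rw [← Algebra.trace_trace (S := M), hrepr, Algebra.trace_algebraMap, h2,
    map_nsmul, two_nsmul]
  exact CharTwo.add_self_eq_zero _

private lemma aux13_card_le (L : Type*) [Field L] [Finite L] (k : ℕ) (hk : 2 ≤ k)
    (h : ∀ x : L, x ^ k = x) : Nat.card L ≤ k := by
  haveI : Fintype L := Fintype.ofFinite L
  classical
  set f : Polynomial L := X ^ k - X with hf
  have hdeg : f.natDegree = k := by
    rw [hf, natDegree_sub_eq_left_of_natDegree_lt] <;>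
      simp [natDegree_X_pow, natDegree_X] <;> omega
  have hroots : ∀ x : L, IsRoot f x := by
    intro x; simp [hf, IsRoot, h x]
  have hf0 : f ≠ 0 := by
    intro h0
    have : f.coeff k = 0 := by rw [h0]; simp
    rw [hf] at this
    rw [coeff_sub, coeff_X_pow, coeff_X] at this
    have hk1 : ¬ (1 = k) := by omega
    simp [hk1] at this
  have hsub : (Finset.univ : Finset L) ⊆ f.roots.toFinset := by
    intro x _
    rw [Multiset.mem_toFinset, mem_roots hf0]
    exact hroots x
  calc Nat.card L = (Finset.univ : Finset L).card := by
        rw [Nat.card_eq_fintype_card, Finset.card_univ]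
    _ ≤ f.roots.toFinset.card := Finset.card_le_card hsub
    _ ≤ Multiset.card f.roots := f.roots.toFinset_card_le
    _ ≤ f.natDegree := f.card_roots'
    _ = k := hdeg

private lemma aux13_frob (K L : Type*) [Field K] [Field L] [Algebra K L]
    [Finite K] [Finite L] [CharP K 2] (m : ℕ) :
    ∃ φ : L ≃ₐ[K] L, ∀ x : L, φ x = x ^ (Nat.card K) ^ m := by
  haveI : Fintype K := Fintype.ofFinite K
  haveI : CharP L 2 := charP_of_injective_algebraMap' (A := L) K 2
  haveI : Fact (Nat.Prime 2) := ⟨Nat.prime_two⟩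
  obtain ⟨n, hp, hcard⟩ := FiniteField.card K 2
  have hq : (Nat.card K) ^ m = 2 ^ ((n : ℕ) * m) := by
    rw [Nat.card_eq_fintype_card, hcard, ← pow_mul]
  let fr : L →+* L := iterateFrobenius L 2 ((n : ℕ) * m)
  have hfr : ∀ x : L, fr x = x ^ (Nat.card K) ^ m := fun x => by
    rw [show fr x = x ^ 2 ^ ((n:ℕ)*m) from iterateFrobenius_def .., hq]
  have hcom : ∀ c : K, fr (algebraMap K L c) = algebraMap K L c := fun c => by
    rw [hfr, ← map_pow, Nat.card_eq_fintype_card, FiniteField.pow_card_pow]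
  let fa : L →ₐ[K] L := { fr with commutes' := hcom }
  have hbij : Function.Bijective fa :=
    Finite.injective_iff_bijective.mp fa.toRingHom.injective
  exact ⟨AlgEquiv.ofBijective fa hbij, fun x => hfr x⟩

theorem stmt_13 (K L : Type*) [Field K] [Field L] [Algebra K L]
    [Finite K] [CharP K 2] (h6 : Module.finrank K L = 6)
    (y : L) (hy : IntermediateField.adjoin K {y} ≠ ⊤) :
    (Algebra.trace K L y = 0 ∧ Algebra.trace K L (y ^ 3) = 0) ↔
      ∃ M : IntermediateField K L, Module.finrank K M = 3 ∧ y ∈ M := by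
  classical
  haveI hfd : FiniteDimensional K L := Module.finite_of_finrank_pos (by rw [h6]; norm_num)
  haveI : Finite L := Module.finite_of_finite K
  haveI : Fintype K := Fintype.ofFinite K
  haveI : Fintype L := Fintype.ofFinite L
  haveI : CharP L 2 := charP_of_injective_algebraMap' (A := L) K 2
  set q := Nat.card K with hqdef
  have hqK : q = Fintype.card K := Nat.card_eq_fintype_card
  have hq2 : 2 ≤ q := by rw [hqK]; exact Fintype.one_lt_card
  have hcardL : Fintype.card L = q ^ 6 := by
    rw [card_eq_pow_finrank (K := K), h6, hqK]
  -- the q^3-power Frobenius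
  obtain ⟨φ3, hφ3⟩ := aux13_frob K L 3
  have hpow6 : ∀ x : L, x ^ q ^ 6 = x := fun x => by
    rw [← hcardL, FiniteField.pow_card]
  have hsq : φ3 ^ 2 = 1 := by
    ext x
    have h1 : (φ3 ^ 2) x = φ3 (φ3 x) := by rw [pow_two]; rfl
    rw [h1, hφ3, hφ3, ← pow_mul, ← pow_add, AlgEquiv.one_apply]
    exact hpow6 x
  have hne1 : φ3 ≠ 1 := by
    intro h1
    have hall : ∀ x : L, x ^ q ^ 3 = x := fun x => by
      rw [← hφ3 x, h1, AlgEquiv.one_apply]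
    have hle := aux13_card_le L (q ^ 3) (le_trans hq2 (Nat.le_self_pow (by norm_num) q)) hall
    rw [Nat.card_eq_fintype_card, hcardL] at hle
    have hlt : q ^ 3 < q ^ 6 := Nat.pow_lt_pow_right (by omega) (by norm_num)
    omega
  have hord : orderOf φ3 = 2 := orderOf_eq_prime hsq hne1
  set H := Subgroup.zpowers φ3 with hHdef
  have hcardH : Fintype.card H = 2 := by
    rw [← Nat.card_eq_fintype_card, Nat.card_zpowers]; exact hord
  have hfl : Module.finrank (fixedField H) L = 2 := by
    rw [IntermediateField.finrank_fixedField_eq_card, Nat.card_eq_fintype_card, hcardH]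
  have hfK : Module.finrank K (fixedField H) = 3 := by
    have h := Module.finrank_mul_finrank K (fixedField H) L
    rw [hfl, h6] at h; omega
  have hmemM : ∀ {x : L}, x ^ q ^ 3 = x → x ∈ fixedField H := by
    intro x hx
    have hst : φ3 ∈ MulAction.stabilizer (L ≃ₐ[K] L) x := by
      rw [MulAction.mem_stabilizer_iff, AlgEquiv.smul_def, hφ3, hx]
    have hle : H ≤ MulAction.stabilizer (L ≃ₐ[K] L) x := Subgroup.zpowers_le.mpr hst
    exact fun g => hle g.2
  -- the subfield E = K(y)
  set E := IntermediateField.adjoin K {y} with hEdef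
  have ymem : y ∈ E := IntermediateField.mem_adjoin_simple_self K y
  set d := Module.finrank K E with hddef
  have hdm : d * Module.finrank E L = 6 := by
    rw [hddef, Module.finrank_mul_finrank]; exact h6
  have hdpos : 0 < d := Module.finrank_pos
  have hcardE : Fintype.card E = q ^ d := by
    rw [card_eq_pow_finrank (K := K), hqK]
  have hyd : y ^ q ^ d = y := by
    have h1 : (⟨y, ymem⟩ : E) ^ Fintype.card E = ⟨y, ymem⟩ := FiniteField.pow_card _
    rw [hcardE] at h1
    have h2 := congrArg (algebraMap E L) h1
    rwa [map_pow] at h2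
  have hd6 : d ≠ 6 := by
    intro hdd
    refine hy (IntermediateField.eq_of_le_of_finrank_eq le_top ?_)
    rw [IntermediateField.finrank_top', h6]
    exact hdd
  have hdle : d ≤ 6 := Nat.le_of_dvd (by norm_num) ⟨_, hdm.symm⟩
  have hstep : ∀ z : L, z ^ q = z → z ^ q ^ 3 = z := by
    intro z hz
    have h1 : z ^ q ^ 3 = ((z ^ q) ^ q) ^ q := by
      rw [← pow_mul, ← pow_mul]
      congr 1
      ring
    rw [h1, hz, hz, hz]
  -- key: trace y = 0 implies y ^ q ^ 3 = y
  have hkey : Algebra.trace K L y = 0 → y ^ q ^ 3 = y := by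
    intro htr
    have hdvd : d ∣ 6 := ⟨_, hdm.symm⟩
    interval_cases d
    · exact hstep y (by simpa using hyd)
    · -- d = 2 : use the trace
      have hEL3 : Module.finrank E L = 3 := by omega
      haveI : CharP E 2 := charP_of_injective_algebraMap' (A := E) K 2
      obtain ⟨ψ, hψ⟩ := aux13_frob K E 1
      have hcardE2 : Fintype.card E = q ^ 2 := hcardE
      have hψ' : ∀ x : E, ψ x = x ^ q := fun x => by rw [hψ, pow_one]
      have hψne : ψ ≠ 1 := by
        intro h1
        have hall : ∀ x : E, x ^ q = x := fun x => by
          rw [← hψ' x, h1, AlgEquiv.one_apply]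
        have hle := aux13_card_le E q hq2 hall
        rw [Nat.card_eq_fintype_card, hcardE2] at hle
        nlinarith
      have hcardG : Fintype.card (E ≃ₐ[K] E) = 2 := by
        rw [← Nat.card_eq_fintype_card, IsGalois.card_aut_eq_finrank]; omega
      have huniv : (Finset.univ : Finset (E ≃ₐ[K] E)) = {1, ψ} := by
        symm
        apply Finset.eq_univ_of_card
        rw [Finset.card_insert_of_notMem (by simpa using hψne.symm), Finset.card_singleton,
          hcardG]
      have htrEL : Algebra.trace E L y = ⟨y, ymem⟩ := by
        have hry : y = algebraMap E L ⟨y, ymem⟩ := rfl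
        conv_lhs => rw [hry]
        rw [Algebra.trace_algebraMap, hEL3]
        rw [show (3 : ℕ) = 2 + 1 by rfl, add_nsmul, two_nsmul, one_nsmul,
          CharTwo.add_self_eq_zero, zero_add]
      have htr2 : Algebra.trace K E ⟨y, ymem⟩ = Algebra.trace K L y := by
        rw [← Algebra.trace_trace (S := E) (x := y), htrEL]
      have hsum := trace_eq_sum_automorphisms (K := K) (⟨y, ymem⟩ : E)
      rw [htr2, htr, map_zero, huniv, Finset.sum_insert (by simpa using hψne.symm),
        Finset.sum_singleton, AlgEquiv.one_apply] at hsum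
      have hfix : ψ ⟨y, ymem⟩ = ⟨y, ymem⟩ := by
        have h1 : ψ ⟨y, ymem⟩ = -⟨y, ymem⟩ := eq_neg_of_add_eq_zero_right hsum.symm
        rw [h1, CharTwo.neg_eq]
      rw [hψ'] at hfix
      have hyq : y ^ q = y := by
        have := congrArg (algebraMap E L) hfix
        rwa [map_pow] at this
      exact hstep y hyq
    · exact hyd
    · exfalso; revert hdvd; norm_num
    · exfalso; revert hdvd; norm_num
    · exact absurd rfl hd6
  constructor
  · rintro ⟨ht1, -⟩
    exact ⟨fixedField H, hfK, hmemM (hkey ht1)⟩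
  · rintro ⟨M, hM3, hyM⟩
    exact ⟨aux13_trace_zero K L h6 M hM3 hyM, aux13_trace_zero K L h6 M hM3 (pow_mem hyM 3)⟩
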